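/- Let A be a Boolean algebra, V a set, and f : A → Set V a map satisfying f(⊤) = V, f(a ⊓ b) = f(a) ∩ f(b), and f(aᶜ) = V \ f(a) for all a, b ∈ A. Suppose f is an atomic representation, i.e. ⋃_{x an atom of A} f(x) = V. Then for every subset Y ⊆ A whose only lower bound in A is ⊥, we have ⋂_{y ∈ Y} f(y) = ∅. -/
import Mathlib

theorem stmt1 {A V : Type*} [BooleanAlgebra A] (f : A → Set V)
    (htop : f ⊤ = Set.univ)
    (hinf : ∀ a b : A, f (a ⊓ b) = f a ∩ f b)
    (hcompl : ∀ a : A, f aᶜ = (f a)ᶜ)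
    (hatomic : ⋃ x ∈ {x : A | IsAtom x}, f x = Set.univ)
    (Y : Set A) (hY : ∀ b : A, (∀ y ∈ Y, b ≤ y) → b = ⊥) :
    ⋂ y ∈ Y, f y = ∅ := by
  have hbot : f ⊥ = ∅ := by
    have := hcompl ⊤
    rw [compl_top] at this
    simp [this, htop]
  ext v
  simp only [Set.mem_iInter, Set.mem_empty_iff_false, iff_false]
  intro hv
  have : v ∈ ⋃ x ∈ {x : A | IsAtom x}, f x := by rw [hatomic]; trivial
  obtain ⟨x, hx, hvx⟩ := by simpa using this
  -- x is an atom, v ∈ f x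
  have hnotlb : ¬ ∀ y ∈ Y, x ≤ y := fun h => hx.1 (hY x h)
  push_neg at hnotlb
  obtain ⟨y, hyY, hxy⟩ := hnotlb
  have hdisj : x ⊓ y = ⊥ := by
    rcases hx.le_iff.mp inf_le_left with h | h
    · exact h
    · exact absurd (h ▸ inf_le_right) hxy
  have : v ∈ f (x ⊓ y) := by rw [hinf]; exact ⟨hvx, hv y hyY⟩
  rw [hdisj, hbot] at this
  exact this
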